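/- Let X be a nonempty set equipped with two metric space structures whose distance functions are d and ρ. Assume (i) for every point p ∈ X there exists r > 0 such that d(x,y) = ρ(x,y) for all x, y in the open ρ-ball of radius r about p, and (ii) ρ is an approximate length metric: for all x, y ∈ X and every ε > 0 there exists a path γ : [0,1] → X with γ(0) = x, γ(1) = y, continuous with respect to ρ, whose total variation with respect to ρ over [0,1] (the supremum over all partitions 0 = t₀ ≤ t₁ ≤ … ≤ t_n = 1 of Σᵢ ρ(γ(t_{i-1}), γ(t_i))) is at most ρ(x,y) + ε. Then d(x,y) ≤ ρ(x,y) for all x, y ∈ X. -/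

import Mathlib

private lemma dist_fin_chain_le {X : Type*} [MetricSpace X] (n : ℕ) (f : Fin (n+1) → X) :
    dist (f 0) (f (Fin.last n)) ≤ ∑ i : Fin n, dist (f i.castSucc) (f i.succ) := by
  induction n with
  | zero => simp [Fin.last]
  | succ n ih =>
    rw [Fin.sum_univ_castSucc]
    calc dist (f 0) (f (Fin.last (n+1)))
        ≤ dist (f 0) (f (Fin.last n).castSucc)
            + dist (f (Fin.last n).castSucc) (f (Fin.last (n+1))) := dist_triangle _ _ _
      _ ≤ _ := by
          refine add_le_add ?_ (le_of_eq ?_)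
          · have := ih (f ∘ Fin.castSucc)
            simpa only [Function.comp_apply, Fin.castSucc_zero, Fin.succ_castSucc] using this
          · rw [Fin.succ_last]

/-- If `ρ` is an approximate length metric and `d` agrees with `ρ` on a small `ρ`-ball around
every point, then `d ≤ ρ`. -/
theorem dist_le_of_locally_compatible_length_metric
    {X : Type*} [Nonempty X] (m₁ m₂ : MetricSpace X)
    (hloc : ∀ p : X, ∃ r > 0, ∀ x y : X,
      @dist X m₂.toDist x p < r → @dist X m₂.toDist y p < r →
      @dist X m₁.toDist x y = @dist X m₂.toDist x y)
    (hlen : ∀ x y : X, ∀ ε > (0 : ℝ), ∃ γ : ℝ → X,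
      γ 0 = x ∧ γ 1 = y ∧
      @ContinuousOn ℝ X _ m₂.toUniformSpace.toTopologicalSpace γ (Set.Icc 0 1) ∧
      ∀ n : ℕ, ∀ t : Fin (n + 1) → ℝ, Monotone t → t 0 = 0 → t (Fin.last n) = 1 →
        ∑ i : Fin n, @dist X m₂.toDist (γ (t i.castSucc)) (γ (t i.succ)) ≤
          @dist X m₂.toDist x y + ε) :
    ∀ x y : X, @dist X m₁.toDist x y ≤ @dist X m₂.toDist x y := by
  intro x y
  refine le_of_forall_pos_le_add fun ε hε => ?_
  obtain ⟨γ, hγ0, hγ1, hcont, hvar⟩ := hlen x y ε hε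
  letI := m₂
  choose r hr hcomp using hloc
  have hK : IsCompact (γ '' Set.Icc (0:ℝ) 1) := isCompact_Icc.image_of_continuousOn hcont
  obtain ⟨δ, hδ, hleb⟩ := lebesgue_number_lemma_of_metric (c := fun p => Metric.ball p (r p))
    hK (fun p => Metric.isOpen_ball)
    (fun z _ => Set.mem_iUnion.mpr ⟨z, Metric.mem_ball_self (hr z)⟩)
  have huc := isCompact_Icc.uniformContinuousOn_of_continuous hcont
  rw [Metric.uniformContinuousOn_iff] at huc
  obtain ⟨η, hη, hucd⟩ := huc δ hδ
  obtain ⟨n, hn⟩ := exists_nat_one_div_lt hη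
  set N := n + 1 with hN
  have hNpos : (0:ℝ) < N := by positivity
  set t : Fin (N+1) → ℝ := fun i => (i : ℝ) / N with htdef
  have htmem : ∀ i : Fin (N+1), t i ∈ Set.Icc (0:ℝ) 1 := by
    intro i
    constructor
    · positivity
    · rw [div_le_one hNpos]
      exact_mod_cast Nat.le_of_lt_succ i.isLt
  have hmono : Monotone t := by
    intro i j hij
    have h : (i:ℝ) ≤ j := by exact_mod_cast hij
    simp only [htdef]
    gcongr
  have ht0 : t 0 = 0 := by simp [htdef]
  have htl : t (Fin.last N) = 1 := by
    simp only [htdef, Fin.val_last]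
    exact div_self (ne_of_gt hNpos)
  have key : ∀ i : Fin N, @dist X m₁.toDist (γ (t i.castSucc)) (γ (t i.succ)) =
      dist (γ (t i.castSucc)) (γ (t i.succ)) := by
    intro i
    have hdt : dist (t i.castSucc) (t i.succ) < η := by
      rw [Real.dist_eq]
      have : t i.succ - t i.castSucc = 1 / N := by
        simp only [htdef, Fin.val_succ, Fin.coe_castSucc]
        push_cast
        ring
      rw [abs_sub_comm, this, abs_of_pos (by positivity)]
      exact_mod_cast hn
    have hd : dist (γ (t i.castSucc)) (γ (t i.succ)) < δ :=
      hucd _ (htmem _) _ (htmem _) hdt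
    obtain ⟨p, hp⟩ := hleb (γ (t i.castSucc)) ⟨_, htmem _, rfl⟩
    exact hcomp p _ _ (hp (Metric.mem_ball_self hδ)) (hp (Metric.mem_ball'.mpr hd))
  calc @dist X m₁.toDist x y
      = @dist X m₁.toDist ((γ ∘ t) 0) ((γ ∘ t) (Fin.last N)) := by
        simp [ht0, htl, hγ0, hγ1]
    _ ≤ ∑ i : Fin N, @dist X m₁.toDist ((γ ∘ t) i.castSucc) ((γ ∘ t) i.succ) :=
        @dist_fin_chain_le X m₁ N (γ ∘ t)
    _ = ∑ i : Fin N, dist (γ (t i.castSucc)) (γ (t i.succ)) := by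
        exact Finset.sum_congr rfl fun i _ => key i
    _ ≤ dist x y + ε := hvar N t hmono ht0 htl
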